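/- Let G = (V,E) be a graph, and let V be partitioned into clusters with at most ε|E| inter-cluster edges. Modify the partition by making singleton clusters out of every vertex u (in a non-singleton cluster S) for which the number of edges from u into S is at most deg(u)/(34α), where α ≥ 1. Then the resulting partition has at most ε(1 + 1/(16α))|E| inter-cluster edges. -/

import Mathlib

open Finset

/-- Number of ordered adjacent pairs `(a, b)` with `a ∈ A`, `b ∈ B`.  For disjoint
`A`, `B` (or `A` a singleton) this equals `|E(A,B)|`. -/
def eB {V : Type*} [DecidableEq V] (G : SimpleGraph V) [DecidableRel G.Adj]
    (A B : Finset V) : ℕ :=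
  ((A ×ˢ B).filter fun p => G.Adj p.1 p.2).card

lemma eB_singleton {V : Type*} [DecidableEq V] (G : SimpleGraph V) [DecidableRel G.Adj]
    (u : V) (B : Finset V) :
    eB G {u} B = (B.filter fun b => G.Adj u b).card := by
  unfold eB
  rw [Finset.singleton_product, Finset.filter_map, Finset.card_map]
  rfl

/-- Let `G = (V,E)` be a graph with a clustering `c : V → ι` having at most `ε|E|`
inter-cluster edges (counted here as ordered pairs: at most `ε · 2|E|`).  Modify
the partition by making a singleton cluster out of every vertex `u` lying in a
non-singleton cluster `S` with `|E({u},S)| ≤ deg(u)/(34α)`, where `α ≥ 1` (the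
new clustering `c'` sends such "bad" vertices to themselves and all other
vertices to their old cluster).  Then the resulting partition has at most
`ε(1 + 1/(16α))|E|` inter-cluster edges. -/
theorem stmt8 {V ι : Type*} [Fintype V] [DecidableEq V] [DecidableEq ι]
    (G : SimpleGraph V) [DecidableRel G.Adj]
    (α ε : ℝ) (hα : 1 ≤ α) (hε : 0 ≤ ε)
    (c : V → ι) (c' : V → ι ⊕ V)
    (Bad : V → Prop)
    (hBad : ∀ u, Bad u ↔
      (1 < (Finset.univ.filter fun v => c v = c u).card ∧
        (eB G {u} (Finset.univ.filter fun v => c v = c u) : ℝ) ≤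
          (G.degree u : ℝ) / (34 * α)))
    (hc' : ∀ v, (Bad v → c' v = Sum.inr v) ∧ (¬ Bad v → c' v = Sum.inl (c v)))
    (hm : (((Finset.univ ×ˢ Finset.univ).filter fun p : V × V =>
        G.Adj p.1 p.2 ∧ c p.1 ≠ c p.2).card : ℝ) ≤ ε * (2 * G.edgeFinset.card)) :
    (((Finset.univ ×ˢ Finset.univ).filter fun p : V × V =>
        G.Adj p.1 p.2 ∧ c' p.1 ≠ c' p.2).card : ℝ)
      ≤ ε * (1 + 1 / (16 * α)) * (2 * G.edgeFinset.card) := by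
  classical
  have hα0 : (0:ℝ) < α := by linarith
  set old : Finset (V × V) := (Finset.univ ×ˢ Finset.univ).filter fun p : V × V =>
      G.Adj p.1 p.2 ∧ c p.1 ≠ c p.2 with hold
  set nw : Finset (V × V) := (Finset.univ ×ˢ Finset.univ).filter fun p : V × V =>
      G.Adj p.1 p.2 ∧ c' p.1 ≠ c' p.2 with hnw
  set exA : Finset (V × V) := (Finset.univ ×ˢ Finset.univ).filter fun p : V × V =>
      G.Adj p.1 p.2 ∧ c p.1 = c p.2 ∧ Bad p.1 with hexA
  set exB : Finset (V × V) := (Finset.univ ×ˢ Finset.univ).filter fun p : V × V =>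
      G.Adj p.1 p.2 ∧ c p.1 = c p.2 ∧ Bad p.2 with hexB
  set low : Finset (V × V) := (Finset.univ ×ˢ Finset.univ).filter fun p : V × V =>
      G.Adj p.1 p.2 ∧ c p.1 ≠ c p.2 ∧ Bad p.1 with hlow
  set Obad : Finset V := Finset.univ.filter fun u => Bad u with hObad
  -- new ⊆ old ∪ exA ∪ exB
  have hsub : nw ⊆ old ∪ exA ∪ exB := by
    intro p hp
    simp only [hnw, Finset.mem_filter, Finset.mem_product, Finset.mem_univ, true_and] at hp
    obtain ⟨hadj, hne⟩ := hp
    simp only [Finset.mem_union, hold, hexA, hexB, Finset.mem_filter, Finset.mem_product,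
      Finset.mem_univ, true_and]
    by_cases hc : c p.1 = c p.2
    · by_cases hb1 : Bad p.1
      · exact Or.inl (Or.inr ⟨hadj, hc, hb1⟩)
      · by_cases hb2 : Bad p.2
        · exact Or.inr ⟨hadj, hc, hb2⟩
        · exfalso
          apply hne
          rw [(hc' p.1).2 hb1, (hc' p.2).2 hb2, hc]
    · exact Or.inl (Or.inl ⟨hadj, hc⟩)
  have hcard1 : nw.card ≤ old.card + exA.card + exB.card := by
    calc nw.card ≤ (old ∪ exA ∪ exB).card := Finset.card_le_card hsub
    _ ≤ (old ∪ exA).card + exB.card := Finset.card_union_le _ _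
    _ ≤ old.card + exA.card + exB.card := by
        have := Finset.card_union_le old exA; omega
  -- exB.card = exA.card via swap
  have hswap : exA.image Prod.swap = exB := by
    ext p
    simp only [hexA, hexB, Finset.mem_image, Finset.mem_filter, Finset.mem_product,
      Finset.mem_univ, true_and]
    constructor
    · rintro ⟨q, ⟨hadj, hcq, hb⟩, rfl⟩
      exact ⟨hadj.symm, hcq.symm, hb⟩
    · rintro ⟨hadj, hcq, hb⟩
      exact ⟨p.swap, ⟨hadj.symm, hcq.symm, by simpa using hb⟩, by simp⟩
  have hABcard : exB.card = exA.card := by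
    rw [← hswap]
    exact Finset.card_image_of_injective _ Prod.swap_injective
  -- per-vertex counts
  have hdeg : ∀ u : V, (Finset.univ.filter fun b => G.Adj u b ∧ c b = c u).card +
      (Finset.univ.filter fun b => G.Adj u b ∧ c b ≠ c u).card = G.degree u := by
    intro u
    have h1 : (Finset.univ.filter fun b => G.Adj u b ∧ c b = c u) =
        (Finset.univ.filter fun b => G.Adj u b).filter fun b => c b = c u := by
      rw [Finset.filter_filter]
    have h2 : (Finset.univ.filter fun b => G.Adj u b ∧ c b ≠ c u) =
        (Finset.univ.filter fun b => G.Adj u b).filter fun b => ¬ (c b = c u) := by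
      rw [Finset.filter_filter]
    rw [h1, h2, Finset.card_filter_add_card_filter_not]
    rw [SimpleGraph.degree, SimpleGraph.neighborFinset_eq_filter]
  have heBeq : ∀ u : V, eB G {u} (Finset.univ.filter fun v => c v = c u) =
      (Finset.univ.filter fun b => G.Adj u b ∧ c b = c u).card := by
    intro u
    rw [eB_singleton, Finset.filter_filter]
    congr 1
    apply Finset.filter_congr
    intro b _
    simp [and_comm]
  -- exA card as a sum
  have hexAcard : exA.card = ∑ u ∈ Obad,
      (Finset.univ.filter fun b => G.Adj u b ∧ c b = c u).card := by
    rw [Finset.card_eq_sum_card_fiberwise (f := Prod.fst) (t := Obad)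
      (fun p hp => by
        simp only [hexA, Finset.mem_coe, Finset.mem_filter, Finset.mem_product, Finset.mem_univ, true_and] at hp
        simp [hObad, hp.2.2])]
    apply Finset.sum_congr rfl
    intro u hu
    have : exA.filter (fun p => p.1 = u) =
        (Finset.univ.filter fun b => G.Adj u b ∧ c b = c u).map
          ⟨fun b => ((u, b) : V × V), fun a b h => by simpa using h⟩ := by
      ext p
      simp only [hexA, Finset.mem_filter, Finset.mem_product, Finset.mem_univ, true_and,
        Finset.mem_map, Function.Embedding.coeFn_mk]
      constructor
      · rintro ⟨⟨hadj, hcq, hb⟩, rfl⟩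
        exact ⟨p.2, ⟨hadj, hcq.symm⟩, rfl⟩
      · rintro ⟨b, ⟨hadj, hcb⟩, rfl⟩
        exact ⟨⟨hadj, hcb.symm, (by simpa [hObad] using hu : Bad u)⟩, rfl⟩
    rw [this, Finset.card_map]
  -- low card as a sum
  have hlowcard : low.card = ∑ u ∈ Obad,
      (Finset.univ.filter fun b => G.Adj u b ∧ c b ≠ c u).card := by
    rw [Finset.card_eq_sum_card_fiberwise (f := Prod.fst) (t := Obad)
      (fun p hp => by
        simp only [hlow, Finset.mem_coe, Finset.mem_filter, Finset.mem_product, Finset.mem_univ, true_and] at hp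
        simp [hObad, hp.2.2])]
    apply Finset.sum_congr rfl
    intro u hu
    have : low.filter (fun p => p.1 = u) =
        (Finset.univ.filter fun b => G.Adj u b ∧ c b ≠ c u).map
          ⟨fun b => ((u, b) : V × V), fun a b h => by simpa using h⟩ := by
      ext p
      simp only [hlow, Finset.mem_filter, Finset.mem_product, Finset.mem_univ, true_and,
        Finset.mem_map, Function.Embedding.coeFn_mk]
      constructor
      · rintro ⟨⟨hadj, hcq, hb⟩, rfl⟩
        exact ⟨p.2, ⟨hadj, fun h => hcq h.symm⟩, rfl⟩
      · rintro ⟨b, ⟨hadj, hcb⟩, rfl⟩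
        exact ⟨⟨hadj, fun h => hcb h.symm, (by simpa [hObad] using hu : Bad u)⟩, rfl⟩
    rw [this, Finset.card_map]
  have hlowsub : low ⊆ old := by
    intro p hp
    simp only [hlow, Finset.mem_filter, Finset.mem_product, Finset.mem_univ, true_and] at hp
    simp only [hold, Finset.mem_filter, Finset.mem_product, Finset.mem_univ, true_and]
    exact ⟨hp.1, hp.2.1⟩
  -- real-number abbreviations
  set M : ℝ := (old.card : ℝ) with hM
  set D : ℝ := ∑ u ∈ Obad, (G.degree u : ℝ) with hD
  set S : ℝ := ∑ u ∈ Obad, ((Finset.univ.filter fun b => G.Adj u b ∧ c b = c u).card : ℝ) with hS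
  have hS_le : 34 * α * S ≤ D := by
    have : S ≤ ∑ u ∈ Obad, (G.degree u : ℝ) / (34 * α) := by
      apply Finset.sum_le_sum
      intro u hu
      have hb : Bad u := by simpa [hObad] using hu
      have := ((hBad u).1 hb).2
      rwa [heBeq u] at this
    rw [← Finset.sum_div] at this
    calc 34 * α * S ≤ 34 * α * (D / (34 * α)) := by
          apply mul_le_mul_of_nonneg_left this (by positivity)
    _ = D := by field_simp
  have hDS : D ≤ M + S := by
    have hls : (low.card : ℝ) ≤ M := by
      rw [hM]; exact_mod_cast Finset.card_le_card hlowsub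
    have : D = S + (low.card : ℝ) := by
      rw [hD, hS, hlowcard]
      push_cast
      rw [← Finset.sum_add_distrib]
      apply Finset.sum_congr rfl
      intro u _
      exact_mod_cast (hdeg u).symm
    linarith
  have hN : (nw.card : ℝ) ≤ M + 2 * S := by
    have h1 : (exA.card : ℝ) = S := by
      rw [hS, hexAcard]; push_cast; ring
    have h2 : (exB.card : ℝ) = S := by rw [← h1]; exact_mod_cast hABcard
    have := hcard1
    have : (nw.card : ℝ) ≤ (old.card : ℝ) + (exA.card : ℝ) + (exB.card : ℝ) := by
      exact_mod_cast this
    linarith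
  -- final arithmetic
  have hS0 : 0 ≤ S := Finset.sum_nonneg fun _ _ => Nat.cast_nonneg _
  have hM0 : 0 ≤ M := by rw [hM]; exact Nat.cast_nonneg _
  have h16 : (0:ℝ) < 16 * α := by linarith
  have hα1 : (0:ℝ) < 34 * α - 1 := by linarith
  have hSM : S * (34 * α - 1) ≤ M := by
    have h : S * (34 * α - 1) = 34 * α * S - S := by ring
    rw [h]; linarith
  have key : (nw.card : ℝ) ≤ M + M * (2 / (34 * α - 1)) := by
    have h2 : 2 * S ≤ M * (2 / (34 * α - 1)) := by
      rw [mul_div_assoc', le_div_iff₀ hα1]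
      have h3 : 2 * S * (34 * α - 1) = 2 * (S * (34 * α - 1)) := by ring
      rw [h3]; linarith
    linarith
  have hfrac : 2 / (34 * α - 1) ≤ 1 / (16 * α) := by
    rw [div_le_div_iff₀ hα1 h16]
    linarith
  have hMM : M * (2 / (34 * α - 1)) ≤ M * (1 / (16 * α)) :=
    mul_le_mul_of_nonneg_left hfrac hM0
  have h1a : (0:ℝ) ≤ 1 + 1 / (16 * α) := by positivity
  calc (nw.card : ℝ) ≤ M + M * (2 / (34 * α - 1)) := key
  _ ≤ M * (1 + 1 / (16 * α)) := by
      have : M * (1 + 1 / (16 * α)) = M + M * (1 / (16 * α)) := by ring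
      rw [this]; linarith
  _ ≤ (ε * (2 * G.edgeFinset.card)) * (1 + 1 / (16 * α)) :=
      mul_le_mul_of_nonneg_right hm h1a
  _ = ε * (1 + 1 / (16 * α)) * (2 * G.edgeFinset.card) := by ring
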